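/- Let M be a real symmetric n×n matrix with eigenvalues μ_1 ≥ ... ≥ μ_n. Among all positive semi-definite matrices B of rank at most r, the minimum of ||B - M||_F^2 equals the sum of μ_i^2 over all indices i such that μ_i < 0 or i > r (i.e., discarding all but the r largest positive eigenvalues). -/

import Mathlib

open Matrix Finset


lemma sum_sq_eq_trace {n : ℕ} (X : Matrix (Fin n) (Fin n) ℝ) :
    ∑ i, ∑ j, (X i j)^2 = Matrix.trace (Xᵀ * X) := by
  rw [Finset.sum_comm]
  simp [Matrix.trace, Matrix.mul_apply, Matrix.diag, sq]

lemma fro_conj {n : ℕ} (U A : Matrix (Fin n) (Fin n) ℝ) (hU : Uᵀ * U = 1) :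
    ∑ i, ∑ j, ((U * A * Uᵀ) i j)^2 = ∑ i, ∑ j, (A i j)^2 := by
  rw [sum_sq_eq_trace, sum_sq_eq_trace]
  have h1 : (U * A * Uᵀ)ᵀ * (U * A * Uᵀ) = U * (Aᵀ * (A * Uᵀ)) := by
    simp only [transpose_mul, transpose_transpose, Matrix.mul_assoc]
    rw [← Matrix.mul_assoc Uᵀ U, hU, Matrix.one_mul]
  rw [h1, Matrix.trace_mul_comm, Matrix.mul_assoc, Matrix.mul_assoc, hU, Matrix.mul_one]

lemma abelN (c d : ℕ → ℝ) (h : ∀ k, ∑ i ∈ Finset.range (k+1), c i ≤ ∑ i ∈ Finset.range (k+1), d i) :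
    ∀ (m : ℕ) (a : ℕ → ℝ), (∀ k, a (k+1) ≤ a k) → 0 ≤ a m →
      ∑ i ∈ Finset.range m, a i * c i ≤ ∑ i ∈ Finset.range m, a i * d i := by
  intro m
  induction m with
  | zero => simp
  | succ m ih =>
    intro a ha hm1
    have hm : 0 ≤ a m := le_trans hm1 (ha m)
    have key := ih (fun i => a i - a m) (fun k => by simpa using ha k) (by simp)
    have expand : ∀ e : ℕ → ℝ, ∑ i ∈ Finset.range (m+1), a i * e i
        = ∑ i ∈ Finset.range m, (a i - a m) * e i + a m * ∑ i ∈ Finset.range (m+1), e i := by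
      intro e
      rw [Finset.mul_sum, Finset.sum_range_succ, Finset.sum_range_succ,
        ← add_assoc, ← Finset.sum_add_distrib]
      congr 1
      exact (Finset.sum_congr rfl fun i _ => by ring)
    rw [expand c, expand d]
    exact add_le_add key (mul_le_mul_of_nonneg_left (h m) hm)


lemma iteSplit {n m : ℕ} (f : Fin n → ℝ) (i : Fin n) : (if (i:ℕ) < m + 1 then f i else 0)
    = (if (i:ℕ) < m then f i else 0) + (if (i:ℕ) = m then f i else 0) := by
  rcases lt_trichotomy (i:ℕ) m with h | h | h
  · rw [if_pos (by omega), if_pos h, if_neg (by omega), add_zero]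
  · rw [if_pos (by omega), if_neg (by omega), if_pos h, zero_add]
  · rw [if_neg (by omega), if_neg (by omega), if_neg (by omega), add_zero]

lemma iteSingle {n m : ℕ} (f : Fin n → ℝ) :
    ∑ i : Fin n, (if (i:ℕ) = m then f i else 0) = if h : m < n then f ⟨m, h⟩ else 0 := by
  split_ifs with h
  · rw [Finset.sum_eq_single ⟨m, h⟩]
    · simp
    · intro b _ hb; rw [if_neg (by simpa [Fin.ext_iff] using hb)]
    · simp
  · apply Finset.sum_eq_zero; intro i _; rw [if_neg (by omega)]

lemma helperExt {n : ℕ} (f : Fin n → ℝ) :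
    ∀ m, ∑ k ∈ Finset.range m, (if h : k < n then f ⟨k, h⟩ else 0)
      = ∑ i : Fin n, if (i : ℕ) < m then f i else 0 := by
  intro m
  induction m with
  | zero => simp
  | succ m ih =>
    rw [Finset.sum_range_succ, ih]
    rw [Finset.sum_congr rfl (fun i _ => iteSplit f i), Finset.sum_add_distrib, iteSingle]


lemma helperOnes {n : ℕ} (m : ℕ) (hm : m ≤ n) :
    ∑ i : Fin n, (if (i:ℕ) < m then (1:ℝ) else 0) = m := by
  rw [Fin.sum_univ_eq_sum_range (fun k => if k < m then (1:ℝ) else 0), ← Finset.sum_filter]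
  have : (Finset.range n).filter (· < m) = Finset.range m := by
    ext k; simp; omega
  rw [this]
  simp

lemma diag_entry {n : ℕ} (lam : Fin n → ℝ) (V : Matrix (Fin n) (Fin n) ℝ) (i : Fin n) :
    (V * diagonal lam * Vᵀ) i i = ∑ j, lam j * (V i j)^2 := by
  rw [Matrix.mul_apply]
  rw [Finset.sum_congr rfl (fun k _ => by rw [Matrix.mul_diagonal, Matrix.transpose_apply] :
    ∀ k ∈ univ, (V * diagonal lam) i k * Vᵀ k i = V i k * lam k * V i k)]
  exact Finset.sum_congr rfl fun j _ => by ring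

lemma col_norm {n : ℕ} (V : Matrix (Fin n) (Fin n) ℝ) (hV : Vᵀ * V = 1) (j : Fin n) :
    ∑ i, (V i j)^2 = 1 := by
  have := congrFun (congrFun hV j) j
  simp only [Matrix.mul_apply, Matrix.transpose_apply, Matrix.one_apply_eq] at this
  rw [← this]
  exact Finset.sum_congr rfl fun i _ => by ring

lemma row_norm {n : ℕ} (V : Matrix (Fin n) (Fin n) ℝ) (hV' : V * Vᵀ = 1) (i : Fin n) :
    ∑ j, (V i j)^2 = 1 := by
  have := congrFun (congrFun hV' i) i
  simp only [Matrix.mul_apply, Matrix.transpose_apply, Matrix.one_apply_eq] at this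
  rw [← this]
  exact Finset.sum_congr rfl fun j _ => by ring

lemma KF {n : ℕ} (lam : Fin n → ℝ) (V : Matrix (Fin n) (Fin n) ℝ)
    (hV : Vᵀ * V = 1) (hV' : V * Vᵀ = 1) (σ : Equiv.Perm (Fin n))
    (hanti : ∀ i j : Fin n, i ≤ j → lam (σ j) ≤ lam (σ i)) (m : ℕ) :
    ∑ i : Fin n, (if (i:ℕ) < m then (V * diagonal lam * Vᵀ) i i else 0)
      ≤ ∑ j : Fin n, (if (j:ℕ) < m then lam (σ j) else 0) := by
  rcases Nat.eq_zero_or_pos m with hm0 | hm0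
  · simp [hm0]
  rcases le_or_gt n m with hnm | hmn
  · -- all conditions true
    have hL : ∀ i : Fin n, (i:ℕ) < m := fun i => lt_of_lt_of_le i.isLt hnm
    have e1 : ∑ i : Fin n, (if (i:ℕ) < m then (V * diagonal lam * Vᵀ) i i else 0)
        = ∑ i : Fin n, (V * diagonal lam * Vᵀ) i i :=
      Finset.sum_congr rfl fun i _ => if_pos (hL i)
    have e2 : ∑ j : Fin n, (if (j:ℕ) < m then lam (σ j) else 0) = ∑ j, lam (σ j) :=
      Finset.sum_congr rfl fun j _ => if_pos (hL j)
    rw [e1, e2, Equiv.sum_comp σ lam]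
    rw [Finset.sum_congr rfl fun i _ => diag_entry lam V i, Finset.sum_comm]
    apply le_of_eq
    refine Finset.sum_congr rfl fun j _ => ?_
    rw [← Finset.mul_sum, col_norm V hV j, mul_one]
  · -- 0 < m < n
    set w : Fin n → ℝ := fun j => ∑ i : Fin n, (if (i:ℕ) < m then (V i j)^2 else 0) with hw
    have hw0 : ∀ j, 0 ≤ w j := fun j =>
      Finset.sum_nonneg fun i _ => by positivity
    have hw1 : ∀ j, w j ≤ 1 := by
      intro j
      calc w j ≤ ∑ i, (V i j)^2 := Finset.sum_le_sum fun i _ => by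
            split_ifs with h
            · exact le_rfl
            · positivity
        _ = 1 := col_norm V hV j
    have hwsum : ∑ j, w j = m := by
      rw [hw]
      rw [Finset.sum_comm]
      have e : ∀ i : Fin n, ∑ j : Fin n, (if (i:ℕ) < m then (V i j)^2 else 0)
          = if (i:ℕ) < m then (1:ℝ) else 0 := by
        intro i
        split_ifs with h
        · exact row_norm V hV' i
        · simp
      rw [Finset.sum_congr rfl fun i _ => e i]
      exact helperOnes m hmn.le
    -- rewrite LHS as ∑ j lam j * w j
    have eLHS : ∑ i : Fin n, (if (i:ℕ) < m then (V * diagonal lam * Vᵀ) i i else 0)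
        = ∑ j, lam j * w j := by
      have e1 : ∀ i : Fin n, i ∈ univ → (if (i:ℕ) < m then (V * diagonal lam * Vᵀ) i i else 0)
          = if (i:ℕ) < m then ∑ j, lam j * (V i j)^2 else 0 := fun i _ => by
        rw [diag_entry lam V i]
      rw [Finset.sum_congr rfl e1]
      have e2 : ∀ i : Fin n, (if (i:ℕ) < m then ∑ j, lam j * (V i j)^2 else 0)
          = ∑ j, lam j * (if (i:ℕ) < m then (V i j)^2 else 0) := by
        intro i
        split_ifs with h
        · simp
        · simp
      rw [Finset.sum_congr rfl fun i _ => e2 i, Finset.sum_comm]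
      exact Finset.sum_congr rfl fun j _ => (Finset.mul_sum _ _ _).symm
    rw [eLHS, ← Equiv.sum_comp σ (fun j => lam j * w j)]
    -- pivot
    set p : Fin n := ⟨m - 1, by omega⟩ with hp
    set cc : ℝ := lam (σ p) with hcc
    have key : ∀ j : Fin n, lam (σ j) * w (σ j)
        ≤ (if (j:ℕ) < m then lam (σ j) else 0) + cc * (w (σ j) - (if (j:ℕ) < m then (1:ℝ) else 0)) := by
      intro j
      split_ifs with h
      · have hjp : j ≤ p := by
          rw [Fin.le_def]; simp [hp]; omega
        have h1 : cc ≤ lam (σ j) := hanti j p hjp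
        have h2 := hw1 (σ j)
        nlinarith
      · have hpj : p ≤ j := by
          rw [Fin.le_def]; simp [hp]; omega
        have h1 : lam (σ j) ≤ cc := hanti p j hpj
        have h2 := hw0 (σ j)
        nlinarith
    calc ∑ j, lam (σ j) * w (σ j)
        ≤ ∑ j : Fin n, ((if (j:ℕ) < m then lam (σ j) else 0)
            + cc * (w (σ j) - (if (j:ℕ) < m then (1:ℝ) else 0))) :=
          Finset.sum_le_sum fun j _ => key j
      _ = ∑ j : Fin n, (if (j:ℕ) < m then lam (σ j) else 0)
            + cc * (∑ j, w (σ j) - ∑ j : Fin n, (if (j:ℕ) < m then (1:ℝ) else 0)) := by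
          rw [Finset.sum_add_distrib, ← Finset.mul_sum, Finset.sum_sub_distrib]
      _ = ∑ j : Fin n, (if (j:ℕ) < m then lam (σ j) else 0) := by
          rw [Equiv.sum_comp σ w, hwsum, helperOnes m hmn.le, sub_self, mul_zero, add_zero]

lemma core {n : ℕ} (r : ℕ) (μ lam : Fin n → ℝ)
    (hmono : ∀ i j : Fin n, i ≤ j → μ j ≤ μ i)
    (V : Matrix (Fin n) (Fin n) ℝ) (hV : Vᵀ * V = 1) (hV' : V * Vᵀ = 1)
    (hlam : ∀ i, 0 ≤ lam i) (hcard : Fintype.card {i // lam i ≠ 0} ≤ r) :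
    (∑ i : Fin n, if μ i < 0 ∨ r < (i:ℕ)+1 then (μ i)^2 else 0)
      ≤ ∑ i, ∑ j, ((V * diagonal lam * Vᵀ) i j - diagonal μ i j)^2 := by
  set C := V * diagonal lam * Vᵀ with hC
  set a : Fin n → ℝ := fun i => max (μ i) 0 with ha
  set σ : Equiv.Perm (Fin n) := Tuple.sort (fun i => -lam i) with hσ
  have hanti : ∀ i j : Fin n, i ≤ j → lam (σ j) ≤ lam (σ i) := by
    intro i j hij
    have := Tuple.monotone_sort (fun i => -lam i) hij
    simpa using this
  -- expansion
  have expand : ∀ i, ∑ j, (C i j - diagonal μ i j)^2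
      = (∑ j, (C i j)^2) - 2*(C i i * μ i) + (μ i)^2 := by
    intro i
    have e : ∀ j : Fin n, (C i j - diagonal μ i j)^2
        = (C i j)^2 - (if i = j then 2*(C i j * μ i) else 0) + (if i = j then (μ i)^2 else 0) := by
      intro j
      rw [Matrix.diagonal_apply]
      split_ifs with h
      · ring
      · ring
    rw [Finset.sum_congr rfl fun j _ => e j, Finset.sum_add_distrib, Finset.sum_sub_distrib,
      Finset.sum_ite_eq, Finset.sum_ite_eq]
    simp only [Finset.mem_univ, if_true]
  have hRHS : ∑ i, ∑ j, (C i j - diagonal μ i j)^2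
      = (∑ i, ∑ j, (C i j)^2) - 2*(∑ i, C i i * μ i) + ∑ i, (μ i)^2 := by
    rw [Finset.sum_congr rfl fun i _ => expand i, Finset.sum_add_distrib, Finset.sum_sub_distrib,
      Finset.mul_sum]
  -- trace of C^2
  have htr : ∑ i, ∑ j, (C i j)^2 = ∑ j, (lam j)^2 := by
    rw [hC, fro_conj V (diagonal lam) hV]
    refine Finset.sum_congr rfl fun i _ => ?_
    have e : ∀ j : Fin n, (diagonal lam i j)^2 = if i = j then (lam i)^2 else 0 := by
      intro j; rw [Matrix.diagonal_apply]; split_ifs with h <;> simp [h]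
    rw [Finset.sum_congr rfl fun j _ => e j, Finset.sum_ite_eq]
    simp
  -- diagonal entries nonneg
  have hCd : ∀ i, 0 ≤ C i i := by
    intro i
    rw [hC, diag_entry lam V i]
    exact Finset.sum_nonneg fun j _ => mul_nonneg (hlam j) (sq_nonneg _)
  have hS1 : ∑ i, C i i * μ i ≤ ∑ i, a i * C i i := by
    refine Finset.sum_le_sum fun i _ => ?_
    rw [mul_comm]
    exact mul_le_mul_of_nonneg_right (le_max_left _ _) (hCd i)
  -- Abel step
  have hS2 : ∑ i, a i * C i i ≤ ∑ i, a i * lam (σ i) := by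
    have hA := abelN (fun k => if h : k < n then C ⟨k,h⟩ ⟨k,h⟩ else 0)
      (fun k => if h : k < n then lam (σ ⟨k,h⟩) else 0)
      (fun k => by
        rw [helperExt (fun i => C i i) (k+1), helperExt (fun i => lam (σ i)) (k+1)]
        exact KF lam V hV hV' σ hanti (k+1))
      n (fun k => if h : k < n then a ⟨k,h⟩ else 0)
      (fun k => by
        show (if h : k+1 < n then a ⟨k+1,h⟩ else 0) ≤ (if h : k < n then a ⟨k,h⟩ else 0)
        by_cases h1 : k + 1 < n
        · have h2 : k < n := by omega
          rw [dif_pos h1, dif_pos h2]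
          exact max_le_max (hmono ⟨k,h2⟩ ⟨k+1,h1⟩ (by simp [Fin.le_def])) le_rfl
        · rw [dif_neg h1]
          by_cases h2 : k < n
          · rw [dif_pos h2]; exact le_max_right _ _
          · rw [dif_neg h2])
      (by show (0:ℝ) ≤ if h : n < n then a ⟨n,h⟩ else 0; rw [dif_neg (lt_irrefl n)])
    have e1 : ∀ (f g : Fin n → ℝ), ∑ k ∈ Finset.range n,
        (if h : k < n then f ⟨k,h⟩ else 0) * (if h : k < n then g ⟨k,h⟩ else 0)
        = ∑ i : Fin n, f i * g i := by
      intro f g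
      have : ∀ k, (if h : k < n then f ⟨k,h⟩ else 0) * (if h : k < n then g ⟨k,h⟩ else 0)
          = if h : k < n then f ⟨k,h⟩ * g ⟨k,h⟩ else 0 := by
        intro k; split_ifs with h <;> simp
      rw [Finset.sum_congr rfl fun k _ => this k, helperExt (fun i => f i * g i) n]
      exact Finset.sum_congr rfl fun i _ => if_pos i.isLt
    rw [e1 a (fun i => C i i), e1 a (fun i => lam (σ i))] at hA
    exact hA
  -- vanish beyond r
  have vanish : ∀ k : Fin n, r ≤ (k:ℕ) → lam (σ k) = 0 := by
    intro k hk
    by_contra hne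
    have hpos : ∀ j : Fin n, j ≤ k → lam (σ j) ≠ 0 := by
      intro j hj
      have h1 := hanti j k hj
      have h2 := hlam (σ k)
      have h3 := hlam (σ j)
      intro h0
      exact hne (le_antisymm (h0 ▸ h1) h2)
    have hsub : (Finset.Iic k).image (fun j => σ j) ⊆ Finset.univ.filter (fun i => lam i ≠ 0) := by
      intro x hx
      simp only [Finset.mem_image, Finset.mem_Iic] at hx
      obtain ⟨j, hj, rfl⟩ := hx
      simp only [Finset.mem_filter, Finset.mem_univ, true_and]
      exact hpos j hj
    have hcard2 : (k:ℕ) + 1 ≤ r := by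
      calc (k:ℕ) + 1 = (Finset.Iic k).card := (Fin.card_Iic k).symm
        _ = ((Finset.Iic k).image (fun j => σ j)).card :=
            (Finset.card_image_of_injective _ σ.injective).symm
        _ ≤ (Finset.univ.filter (fun i => lam i ≠ 0)).card := Finset.card_le_card hsub
        _ = Fintype.card {i // lam i ≠ 0} := (Fintype.card_subtype _).symm
        _ ≤ r := hcard
    omega
  -- final chain
  have hS3 : ∑ i, a i * lam (σ i)
      ≤ ((∑ i : Fin n, if (i:ℕ) < r then (a i)^2 else 0) + ∑ j, (lam j)^2) / 2 := by
    have e1 : ∑ i, a i * lam (σ i) = ∑ i : Fin n, (if (i:ℕ) < r then a i * lam (σ i) else 0) := by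
      refine Finset.sum_congr rfl fun i _ => ?_
      by_cases h : (i:ℕ) < r
      · rw [if_pos h]
      · rw [if_neg h, vanish i (by omega), mul_zero]
    have e2 : ∀ i : Fin n, (if (i:ℕ) < r then a i * lam (σ i) else 0)
        ≤ (if (i:ℕ) < r then (a i)^2 else 0) / 2 + (if (i:ℕ) < r then (lam (σ i))^2 else 0) / 2 := by
      intro i
      split_ifs with h
      · nlinarith [sq_nonneg (a i - lam (σ i))]
      · simp
    have e3 : ∑ i : Fin n, (if (i:ℕ) < r then (lam (σ i))^2 else 0) ≤ ∑ j, (lam j)^2 := by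
      calc ∑ i : Fin n, (if (i:ℕ) < r then (lam (σ i))^2 else 0)
          ≤ ∑ i : Fin n, (lam (σ i))^2 := Finset.sum_le_sum fun i _ => by
            split_ifs with h
            · exact le_rfl
            · positivity
        _ = ∑ j, (lam j)^2 := Equiv.sum_comp σ (fun j => (lam j)^2)
    calc ∑ i, a i * lam (σ i)
        = ∑ i : Fin n, (if (i:ℕ) < r then a i * lam (σ i) else 0) := e1
      _ ≤ ∑ i : Fin n, ((if (i:ℕ) < r then (a i)^2 else 0) / 2
            + (if (i:ℕ) < r then (lam (σ i))^2 else 0) / 2) := Finset.sum_le_sum fun i _ => e2 i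
      _ = (∑ i : Fin n, (if (i:ℕ) < r then (a i)^2 else 0)) / 2
            + (∑ i : Fin n, (if (i:ℕ) < r then (lam (σ i))^2 else 0)) / 2 := by
          rw [Finset.sum_add_distrib, Finset.sum_div, Finset.sum_div]
      _ ≤ _ := by linarith [e3]
  -- target rewriting
  have hT : (∑ i : Fin n, if μ i < 0 ∨ r < (i:ℕ)+1 then (μ i)^2 else 0)
      = ∑ i, (μ i)^2 - ∑ i : Fin n, (if (i:ℕ) < r then (a i)^2 else 0) := by
    rw [← Finset.sum_sub_distrib]
    refine Finset.sum_congr rfl fun i _ => ?_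
    by_cases h1 : (i:ℕ) < r
    · rw [if_pos h1]
      by_cases h2 : μ i < 0
      · rw [if_pos (Or.inl h2), ha]
        simp only [max_eq_right h2.le]
        ring
      · rw [if_neg (by push_neg; exact ⟨by linarith [not_lt.mp h2], by omega⟩), ha]
        simp only [max_eq_left (not_lt.mp h2)]
        ring
    · rw [if_pos (Or.inr (by omega)), if_neg h1]
      ring
  rw [hRHS, hT, htr]
  linarith [hS1, hS2, hS3]


theorem psd_low_rank_approx (n r : ℕ) (M : Matrix (Fin n) (Fin n) ℝ) (hM : M.IsSymm)
    (μ : Fin n → ℝ) (hmono : ∀ i j : Fin n, i ≤ j → μ j ≤ μ i)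
    (U : Matrix (Fin n) (Fin n) ℝ) (hU : Uᵀ * U = 1)
    (hdecomp : M = U * Matrix.diagonal μ * Uᵀ) :
    IsLeast
      { x : ℝ | ∃ B : Matrix (Fin n) (Fin n) ℝ,
          B.PosSemidef ∧ B.rank ≤ r ∧ x = ∑ i, ∑ j, (B i j - M i j) ^ 2 }
      (∑ i : Fin n, if μ i < 0 ∨ r < (i : ℕ) + 1 then (μ i) ^ 2 else 0) := by
  have hUU : U * Uᵀ = 1 := mul_eq_one_comm.mp hU
  have hdet : IsUnit U.det := by
    have h := congrArg Matrix.det hU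
    rw [Matrix.det_mul, Matrix.det_transpose, Matrix.det_one] at h
    exact isUnit_iff_exists_inv.mpr ⟨_, h⟩
  have hdetT : IsUnit Uᵀ.det := by rw [Matrix.det_transpose]; exact hdet
  constructor
  · -- membership
    set ν : Fin n → ℝ := fun i => if 0 ≤ μ i ∧ (i:ℕ) < r then μ i else 0 with hν
    have hν0 : ∀ i, 0 ≤ ν i := by
      intro i; rw [hν]; dsimp only; split_ifs with h
      · exact h.1
      · exact le_rfl
    refine ⟨U * diagonal ν * Uᵀ, ?_, ?_, ?_⟩
    · have h := (Matrix.posSemidef_diagonal_iff.mpr hν0).mul_mul_conjTranspose_same U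
      rwa [Matrix.conjTranspose_eq_transpose_of_trivial] at h
    · rw [Matrix.rank_mul_eq_left_of_isUnit_det Uᵀ (U * diagonal ν) hdetT,
        Matrix.rank_mul_eq_right_of_isUnit_det U (diagonal ν) hdet,
        Matrix.rank_diagonal]
      calc Fintype.card {i // ν i ≠ 0}
          = (Finset.univ.filter (fun i => ν i ≠ 0)).card := Fintype.card_subtype _
        _ ≤ (Finset.range r).card := by
            refine Finset.card_le_card_of_injOn (fun (i : Fin n) => (i:ℕ)) ?_ ?_
            · intro i hi
              simp only [Finset.mem_coe, Finset.mem_filter, Finset.mem_univ, true_and] at hi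
              simp only [Finset.mem_coe, Finset.mem_range]
              by_contra hcon
              exact hi (by rw [hν]; dsimp only; rw [if_neg (by omega)])
            · intro x _ y _ hxy
              exact Fin.ext hxy
        _ = r := Finset.card_range r
    · have hBM : U * diagonal ν * Uᵀ - M = U * diagonal (fun i => ν i - μ i) * Uᵀ := by
        rw [hdecomp, ← Matrix.sub_mul, ← Matrix.mul_sub, Matrix.diagonal_sub]
      have e0 : ∀ i j, (U * diagonal ν * Uᵀ) i j - M i j
          = (U * diagonal (fun i => ν i - μ i) * Uᵀ) i j := by
        intro i j
        rw [← hBM]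
        simp [Matrix.sub_apply]
      calc (∑ i : Fin n, if μ i < 0 ∨ r < (i : ℕ) + 1 then (μ i) ^ 2 else 0)
          = ∑ i : Fin n, (ν i - μ i)^2 := by
            refine Finset.sum_congr rfl fun i _ => ?_
            rw [hν]; dsimp only
            by_cases h : 0 ≤ μ i ∧ (i:ℕ) < r
            · rw [if_pos h, if_neg (by push_neg; exact ⟨by linarith [h.1], by omega⟩)]
              ring
            · rw [if_neg h]
              have : μ i < 0 ∨ r < (i:ℕ) + 1 := by
                by_contra hc
                push_neg at hc
                exact h ⟨by linarith [hc.1], by omega⟩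
              rw [if_pos this]
              ring
        _ = ∑ i : Fin n, ∑ j : Fin n, (diagonal (fun i => ν i - μ i) i j)^2 := by
            refine Finset.sum_congr rfl fun i _ => ?_
            have e : ∀ j : Fin n, (diagonal (fun k => ν k - μ k) i j)^2
                = if i = j then (ν i - μ i)^2 else 0 := by
              intro j; rw [Matrix.diagonal_apply]; split_ifs with h <;> simp [h]
            rw [Finset.sum_congr rfl fun j _ => e j, Finset.sum_ite_eq]
            simp
        _ = ∑ i, ∑ j, ((U * diagonal (fun i => ν i - μ i) * Uᵀ) i j)^2 :=
            (fro_conj U _ hU).symm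
        _ = ∑ i, ∑ j, ((U * diagonal ν * Uᵀ) i j - M i j) ^ 2 := by
            refine Finset.sum_congr rfl fun i _ => Finset.sum_congr rfl fun j _ => ?_
            rw [e0 i j]
  · -- lower bound
    rintro x ⟨B, hB, hrank, rfl⟩
    set C : Matrix (Fin n) (Fin n) ℝ := Uᵀ * B * U with hCdef
    have hCpsd : C.PosSemidef := by
      have h := hB.mul_mul_conjTranspose_same Uᵀ
      rwa [Matrix.conjTranspose_eq_transpose_of_trivial, Matrix.transpose_transpose] at h
    have hH : C.IsHermitian := hCpsd.1
    set lam : Fin n → ℝ := hH.eigenvalues with hlamdef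
    set V : Matrix (Fin n) (Fin n) ℝ := (hH.eigenvectorUnitary : Matrix (Fin n) (Fin n) ℝ)
      with hVdef
    have hVmem := (hH.eigenvectorUnitary).2
    have hV : Vᵀ * V = 1 := by
      have h := (Unitary.mem_iff.mp hVmem).1
      rwa [Matrix.star_eq_conjTranspose, Matrix.conjTranspose_eq_transpose_of_trivial] at h
    have hV' : V * Vᵀ = 1 := by
      have h := (Unitary.mem_iff.mp hVmem).2
      rwa [Matrix.star_eq_conjTranspose, Matrix.conjTranspose_eq_transpose_of_trivial] at h
    have hspec : C = V * diagonal lam * Vᵀ := by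
      have h := hH.spectral_theorem
      rwa [Unitary.conjStarAlgAut_apply, Matrix.star_eq_conjTranspose, Matrix.conjTranspose_eq_transpose_of_trivial] at h
    have hlam0 : ∀ i, 0 ≤ lam i := hCpsd.eigenvalues_nonneg
    have hcard : Fintype.card {i // lam i ≠ 0} ≤ r := by
      rw [hlamdef, ← hH.rank_eq_card_non_zero_eigs]
      calc C.rank = (Uᵀ * B).rank :=
            Matrix.rank_mul_eq_left_of_isUnit_det U (Uᵀ * B) hdet
        _ = B.rank := Matrix.rank_mul_eq_right_of_isUnit_det Uᵀ B hdetT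
        _ ≤ r := hrank
    have hBeq : B = U * C * Uᵀ := by
      rw [hCdef]
      simp only [Matrix.mul_assoc]
      rw [hUU, Matrix.mul_one, ← Matrix.mul_assoc, hUU, Matrix.one_mul]
    have hBM : B - M = U * (V * diagonal lam * Vᵀ - diagonal μ) * Uᵀ := by
      rw [hBeq, hdecomp, ← hspec, Matrix.mul_sub, Matrix.sub_mul]
    have hval : ∑ i, ∑ j, (B i j - M i j) ^ 2
        = ∑ i, ∑ j, ((V * diagonal lam * Vᵀ) i j - diagonal μ i j)^2 := by
      calc ∑ i, ∑ j, (B i j - M i j) ^ 2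
          = ∑ i, ∑ j, ((U * (V * diagonal lam * Vᵀ - diagonal μ) * Uᵀ) i j)^2 := by
            refine Finset.sum_congr rfl fun i _ => Finset.sum_congr rfl fun j _ => ?_
            rw [← hBM]
            simp [Matrix.sub_apply]
        _ = ∑ i, ∑ j, ((V * diagonal lam * Vᵀ - diagonal μ) i j)^2 := fro_conj U _ hU
        _ = ∑ i, ∑ j, ((V * diagonal lam * Vᵀ) i j - diagonal μ i j)^2 := by
            refine Finset.sum_congr rfl fun i _ => Finset.sum_congr rfl fun j _ => ?_
            simp [Matrix.sub_apply]
    rw [hval]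
    exact core r μ lam hmono V hV hV' hlam0 hcard
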